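/- Suppose F, G : ℝ² → ℝ (in variables (s,α), α > 0) satisfy F(s,α) = −cα² + O(α^{5/2}) + O(s) and G(s,α) = O(α^{5/2}) − c₂s + o(s) as (s,α) → 0, with c, c₂ > 0, and for each fixed small α the map s ↦ G(s,α) is continuous. Then for any m with 2 < m < 5/2 and all sufficiently small α > 0, there exists s with |s| < α^m such that G(s,α) = 0 and F(s,α) < 0. -/

import Mathlib

lemma rpow_small_aux {p K : ℝ} (hp : 0 < p) (hK : 0 < K) :
    ∃ β : ℝ, 0 < β ∧ ∀ α : ℝ, 0 < α → α < β → α ^ p < K := by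
  refine ⟨K ^ p⁻¹, Real.rpow_pos_of_pos hK _, fun α hα hαβ => ?_⟩
  calc α ^ p < (K ^ p⁻¹) ^ p := Real.rpow_lt_rpow hα.le hαβ hp
    _ = K := by rw [← Real.rpow_mul hK.le, inv_mul_cancel₀ hp.ne', Real.rpow_one]

set_option maxHeartbeats 1000000 in
/-- Abstract intermediate-value/parameter-matching argument concluding the proof of the
main theorem: if `F(s,α) = −cα² + O(α^{5/2}) + O(s)` and
`G(s,α) = O(α^{5/2}) − c₂s + o(s)` with `c, c₂ > 0`, and `s ↦ G(s,α)` is continuous,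
then for any `2 < m < 5/2` and all sufficiently small `α > 0` there is `s` with
`|s| < α^m`, `G(s,α) = 0` and `F(s,α) < 0`. -/
theorem parameter_matching (F G : ℝ → ℝ → ℝ) (c c₂ : ℝ) (hc : 0 < c) (hc₂ : 0 < c₂)
    (E R : ℝ → ℝ)
    (hGdef : ∀ s α, G s α = E α - c₂ * s + R s)
    (hE : ∃ C δ : ℝ, 0 < C ∧ 0 < δ ∧ ∀ α : ℝ, 0 < α → α < δ →
      |E α| ≤ C * α ^ ((5:ℝ)/2))
    (hR : ∀ ε : ℝ, 0 < ε → ∃ δ : ℝ, 0 < δ ∧ ∀ s : ℝ, |s| < δ → |R s| ≤ ε * |s|)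
    (hF : ∃ C δ : ℝ, 0 < C ∧ 0 < δ ∧ ∀ s α : ℝ, 0 < α → α < δ → |s| < δ →
      |F s α + c * α ^ 2| ≤ C * (α ^ ((5:ℝ)/2) + |s|))
    (hGcont : ∀ α : ℝ, Continuous fun s => G s α) :
    ∀ m : ℝ, 2 < m → m < 5/2 →
      ∃ α₀ : ℝ, 0 < α₀ ∧ ∀ α : ℝ, 0 < α → α < α₀ →
        ∃ s : ℝ, |s| < α ^ m ∧ G s α = 0 ∧ F s α < 0 := by
  intro m hm2 hm52
  obtain ⟨CE, δE, hCE, hδE, hEbd⟩ := hE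
  obtain ⟨δR, hδR, hRbd⟩ := hR (c₂ / 2) (by positivity)
  obtain ⟨CF, δF, hCF, hδF, hFbd⟩ := hF
  obtain ⟨β₁, hβ₁, h1⟩ := rpow_small_aux (p := 5/2 - m) (K := c₂ / (2 * CE))
    (by linarith) (by positivity)
  obtain ⟨β₂, hβ₂, h2⟩ := rpow_small_aux (p := 1/2) (K := c / (4 * CF))
    (by norm_num) (by positivity)
  obtain ⟨β₃, hβ₃, h3⟩ := rpow_small_aux (p := m - 2) (K := c / (4 * CF))
    (by linarith) (by positivity)
  refine ⟨min (min 1 (min δE δF)) (min δR (min β₁ (min β₂ β₃))), by positivity, ?_⟩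
  intro α hα hαα₀
  simp only [lt_min_iff] at hαα₀
  obtain ⟨⟨hα1, hαδE, hαδF⟩, hαδR, hαβ₁, hαβ₂, hαβ₃⟩ := hαα₀
  set t : ℝ := α ^ m with ht_def
  have ht : 0 < t := Real.rpow_pos_of_pos hα m
  have htα : t < α := by
    have := Real.rpow_lt_rpow_of_exponent_gt hα hα1 (show (1:ℝ) < m by linarith)
    rwa [Real.rpow_one] at this
  -- E bound
  have hEα : |E α| ≤ CE * α ^ ((5:ℝ)/2) := hEbd α hα hαδE
  have hsplit52 : α ^ ((5:ℝ)/2) = α ^ ((5:ℝ)/2 - m) * t := by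
    rw [ht_def, ← Real.rpow_add hα]; congr 1; ring
  have hEA : CE * α ^ ((5:ℝ)/2) < (c₂ / 2) * t := by
    rw [hsplit52]
    have := h1 α hα hαβ₁
    have hCEpos := hCE
    calc CE * (α ^ ((5:ℝ)/2 - m) * t) < CE * ((c₂ / (2 * CE)) * t) := by
          apply mul_lt_mul_of_pos_left _ hCE
          exact mul_lt_mul_of_pos_right this ht
      _ = (c₂ / 2) * t := by field_simp
  -- G at endpoints
  have hRt : |R t| ≤ (c₂ / 2) * t := by
    have := hRbd t (by rw [abs_of_pos ht]; linarith)
    rwa [abs_of_pos ht] at this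
  have hRnt : |R (-t)| ≤ (c₂ / 2) * t := by
    have := hRbd (-t) (by rw [abs_neg, abs_of_pos ht]; linarith)
    rwa [abs_neg, abs_of_pos ht] at this
  have hGt : G t α < 0 := by
    rw [hGdef]
    have h1' : E α ≤ CE * α ^ ((5:ℝ)/2) := (abs_le.1 hEα).2
    have h2' : R t ≤ (c₂ / 2) * t := (abs_le.1 hRt).2
    nlinarith
  have hGnt : 0 < G (-t) α := by
    rw [hGdef]
    have h1' : -(CE * α ^ ((5:ℝ)/2)) ≤ E α := (abs_le.1 hEα).1
    have h2' : -((c₂ / 2) * t) ≤ R (-t) := (abs_le.1 hRnt).1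
    nlinarith
  -- IVT
  have hsub := intermediate_value_Icc' (show -t ≤ t by linarith)
    ((hGcont α).continuousOn (s := Set.Icc (-t) t))
  have h0mem : (0:ℝ) ∈ Set.Icc (G t α) (G (-t) α) := ⟨hGt.le, hGnt.le⟩
  obtain ⟨s, hs, hGs⟩ := hsub h0mem
  have hGs0 : G s α = 0 := hGs
  have hlt1 : -t < s :=
    lt_of_le_of_ne hs.1 (fun h => by rw [← h] at hGs0; exact absurd hGs0 hGnt.ne')
  have hlt2 : s < t :=
    lt_of_le_of_ne hs.2 (fun h => by rw [h] at hGs0; exact absurd hGs0 hGt.ne)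
  have hslt : |s| < t := abs_lt.2 ⟨hlt1, hlt2⟩
  -- F bound
  have hFs := hFbd s α hα hαδF (by linarith [abs_nonneg s])
  have hA2 : α ^ ((2:ℝ)) = α ^ (2:ℕ) := Real.rpow_two α
  have hα2pos : (0:ℝ) < α ^ (2:ℕ) := by positivity
  have hsplit12 : α ^ ((5:ℝ)/2) = α ^ ((1:ℝ)/2) * α ^ (2:ℕ) := by
    rw [← hA2, ← Real.rpow_add hα]; congr 1; ring
  have hsplitm : t = α ^ (m - 2) * α ^ (2:ℕ) := by
    rw [← hA2, ht_def, ← Real.rpow_add hα]; congr 1; ring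
  have hb2 : CF * α ^ ((5:ℝ)/2) < (c / 4) * α ^ (2:ℕ) := by
    rw [hsplit12]
    have := h2 α hα hαβ₂
    calc CF * (α ^ ((1:ℝ)/2) * α ^ (2:ℕ)) < CF * ((c / (4 * CF)) * α ^ (2:ℕ)) := by
          apply mul_lt_mul_of_pos_left _ hCF
          exact mul_lt_mul_of_pos_right this hα2pos
      _ = (c / 4) * α ^ (2:ℕ) := by field_simp
  have hb3 : CF * t < (c / 4) * α ^ (2:ℕ) := by
    rw [hsplitm]
    have := h3 α hα hαβ₃
    calc CF * (α ^ (m - 2) * α ^ (2:ℕ)) < CF * ((c / (4 * CF)) * α ^ (2:ℕ)) := by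
          apply mul_lt_mul_of_pos_left _ hCF
          exact mul_lt_mul_of_pos_right this hα2pos
      _ = (c / 4) * α ^ (2:ℕ) := by field_simp
  refine ⟨s, hslt, hGs0, ?_⟩
  have hFle : F s α + c * α ^ 2 ≤ CF * (α ^ ((5:ℝ)/2) + |s|) := (abs_le.1 hFs).2
  have : CF * |s| ≤ CF * t := mul_le_mul_of_nonneg_left hslt.le hCF.le
  nlinarith
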